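/- Let M' ≤ M and let δ : Matrix (Fin M) (Fin M) (ZMod 2) satisfy δ·δ = 0. Assume δ is good: the only vector v with δ·v = 0 whose first M' coordinates all vanish is v = 0. With S, Q, π as in the construction of the reduced boundary operator, and δ' : Q → Q the unique linear map with δ'(π x) = π(res(δ·(ext x))), the following hold: finrank(S) = M − M'; finrank(Q) = 2M' − M; finrank(ker δ') = (M − rank δ) − (M − M'); and finrank(range δ') = rank(δ) − (M − M'). -/

import Mathlib

set_option maxHeartbeats 1000000


open Matrix

/-- Dimensions associated with the reduced boundary operator of a good boundary
operator: `dim S = M − M'`, `dim Q = 2M' − M`, `dim ker δ' = dim ker δ − (M − M')`, and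
`dim im δ' = rank δ − (M − M')`. -/
theorem reduced_boundary_operator_dimensions (M M' : ℕ) (hM' : M' ≤ M)
    (δ : Matrix (Fin M) (Fin M) (ZMod 2)) (hδ : δ * δ = 0)
    (hgood : ∀ v : Fin M → ZMod 2, δ.mulVec v = 0 →
      (∀ i : Fin M', v (Fin.castLE hM' i) = 0) → v = 0)
    (res : (Fin M → ZMod 2) → (Fin M' → ZMod 2))
    (hres : ∀ (v : Fin M → ZMod 2) (i : Fin M'), res v i = v (Fin.castLE hM' i))
    (ext : (Fin M' → ZMod 2) → (Fin M → ZMod 2))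
    (hext : ∀ (x : Fin M' → ZMod 2) (i : Fin M),
      ext x i = if h : (i : ℕ) < M' then x ⟨(i : ℕ), h⟩ else 0)
    (S : Submodule (ZMod 2) (Fin M' → ZMod 2))
    (hS : ∀ y : Fin M' → ZMod 2, y ∈ S ↔
      ∃ v : Fin M → ZMod 2, res v = 0 ∧ res (δ.mulVec v) = y)
    (δ' : ((Fin M' → ZMod 2) ⧸ S) →ₗ[ZMod 2] ((Fin M' → ZMod 2) ⧸ S))
    (hδ' : ∀ x : Fin M' → ZMod 2, δ' (S.mkQ x) = S.mkQ (res (δ.mulVec (ext x)))) :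
    Module.finrank (ZMod 2) S = M - M' ∧
    Module.finrank (ZMod 2) ((Fin M' → ZMod 2) ⧸ S) = 2 * M' - M ∧
    Module.finrank (ZMod 2) (LinearMap.ker δ') = (M - δ.rank) - (M - M') ∧
    Module.finrank (ZMod 2) (LinearMap.range δ') = δ.rank - (M - M') := by
  classical
  set resL : (Fin M → ZMod 2) →ₗ[ZMod 2] (Fin M' → ZMod 2) :=
    LinearMap.funLeft (ZMod 2) (ZMod 2) (Fin.castLE hM') with hresLdef
  have hresL : res = ⇑resL := by
    funext v i; rw [hres]; rfl
  have hres_sub : ∀ a b, res (a - b) = res a - res b := by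
    intro a b; rw [hresL]; exact map_sub resL a b
  have hresext : ∀ x, res (ext x) = x := by
    intro x; funext i
    rw [hres, hext]
    simp [Fin.castLE]
  have hgood' : ∀ v, δ.mulVec v = 0 → res v = 0 → v = 0 := by
    intro v h1 h2
    exact hgood v h1 (fun i => by rw [← hres v i, h2]; rfl)
  have hδδ : ∀ v, δ.mulVec (δ.mulVec v) = 0 := by
    intro v; rw [Matrix.mulVec_mulVec, hδ, Matrix.zero_mulVec]
  -- the subspace W of vectors vanishing on the first M' coordinates
  set W : Submodule (ZMod 2) (Fin M → ZMod 2) := LinearMap.ker resL with hWdef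
  have memW : ∀ v, v ∈ W ↔ res v = 0 := by
    intro v; rw [hWdef, LinearMap.mem_ker, ← hresL]
  have hWrank : Module.finrank (ZMod 2) W + M' = M := by
    have hsurj : Function.Surjective resL :=
      LinearMap.funLeft_surjective_of_injective _ _ _ (Fin.castLE_injective hM')
    have h := LinearMap.finrank_range_add_finrank_ker resL
    rw [LinearMap.range_eq_top.mpr hsurj, finrank_top, ← hWdef] at h
    simp only [Module.finrank_pi, Fintype.card_fin] at h
    omega
  -- S is the image of W under res ∘ δ
  set g : W →ₗ[ZMod 2] (Fin M' → ZMod 2) := (resL ∘ₗ δ.mulVecLin).domRestrict W with hgdef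
  have hgapp : ∀ w : W, g w = res (δ.mulVec (w : Fin M → ZMod 2)) := by
    intro w; simp [hgdef, hresL]
  have hrangeg : LinearMap.range g = S := by
    ext y
    rw [LinearMap.mem_range, hS]
    constructor
    · rintro ⟨⟨v, hv⟩, rfl⟩
      exact ⟨v, (memW v).mp hv, (hgapp ⟨v, hv⟩).symm⟩
    · rintro ⟨v, h1, h2⟩
      exact ⟨⟨v, (memW v).mpr h1⟩, by rw [hgapp]; exact h2⟩
  have hkerg : LinearMap.ker g = ⊥ := by
    rw [LinearMap.ker_eq_bot']
    rintro ⟨v, hv⟩ hgv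
    rw [hgapp] at hgv
    have h2 : δ.mulVec v = 0 := hgood' _ (hδδ v) hgv
    exact Subtype.ext (hgood' v h2 ((memW v).mp hv))
  have hSrank : Module.finrank (ZMod 2) S = Module.finrank (ZMod 2) W := by
    have h := LinearMap.finrank_range_add_finrank_ker g
    rw [hkerg, finrank_bot, hrangeg, add_zero] at h
    exact h
  -- the kernel of δ
  set K : Submodule (ZMod 2) (Fin M → ZMod 2) := LinearMap.ker δ.mulVecLin with hKdef
  have memK : ∀ v, v ∈ K ↔ δ.mulVec v = 0 := by
    intro v; rw [hKdef, LinearMap.mem_ker, Matrix.mulVecLin_apply]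
  have hKrank : Module.finrank (ZMod 2) K + δ.rank = M := by
    have h := LinearMap.finrank_range_add_finrank_ker δ.mulVecLin
    rw [Matrix.rank]
    rw [← hKdef] at h
    simp only [Module.finrank_pi, Fintype.card_fin] at h
    omega
  -- the map φ : ker δ → Q
  set φ : K →ₗ[ZMod 2] ((Fin M' → ZMod 2) ⧸ S) := (S.mkQ ∘ₗ resL).domRestrict K with hφdef
  have hφapp : ∀ v : K, φ v = S.mkQ (res (v : Fin M → ZMod 2)) := by
    intro v; simp [hφdef, hresL]
  -- θ : W ≃ ker φ, via δ
  have hθ0mem : ∀ w : W, δ.mulVec (w : Fin M → ZMod 2) ∈ K := by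
    intro w; rw [memK]; exact hδδ _
  set θ0 : W →ₗ[ZMod 2] K :=
    LinearMap.codRestrict K (δ.mulVecLin.domRestrict W) (fun w => hθ0mem w) with hθ0def
  have hθ0app : ∀ w : W, (θ0 w : Fin M → ZMod 2) = δ.mulVec (w : Fin M → ZMod 2) := by
    intro w; simp [hθ0def]; rfl
  have hθ0ker : ∀ w : W, θ0 w ∈ LinearMap.ker φ := by
    intro w
    rw [LinearMap.mem_ker, hφapp, hθ0app, Submodule.mkQ_apply, Submodule.Quotient.mk_eq_zero]
    exact (hS _).mpr ⟨w, (memW _).mp w.2, rfl⟩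
  set θ : W →ₗ[ZMod 2] LinearMap.ker φ :=
    LinearMap.codRestrict (LinearMap.ker φ) θ0 hθ0ker with hθdef
  have hθbij : Function.Bijective θ := by
    constructor
    · rw [← LinearMap.ker_eq_bot, LinearMap.ker_eq_bot']
      rintro ⟨v, hv⟩ h0
      have h1 : δ.mulVec v = 0 := by
        have := congrArg (fun z : LinearMap.ker φ => ((z : K) : Fin M → ZMod 2)) h0
        simpa [hθdef, hθ0app] using this
      exact Subtype.ext (hgood' v h1 ((memW v).mp hv))
    · rintro ⟨⟨v, hvK⟩, hvker⟩
      have h1 : res v ∈ S := by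
        rw [LinearMap.mem_ker, hφapp, Submodule.mkQ_apply, Submodule.Quotient.mk_eq_zero] at hvker
        exact hvker
      obtain ⟨w, hw1, hw2⟩ := (hS _).mp h1
      have hu : v - δ.mulVec w = 0 := by
        refine hgood' _ ?_ ?_
        · rw [Matrix.mulVec_sub, (memK v).mp hvK, hδδ, sub_self]
        · rw [hres_sub, hw2, sub_self]
      refine ⟨⟨w, (memW w).mpr hw1⟩, ?_⟩
      apply Subtype.ext; apply Subtype.ext
      show (θ0 ⟨w, (memW w).mpr hw1⟩ : Fin M → ZMod 2) = v
      rw [hθ0app]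
      have : v = δ.mulVec w := by rwa [sub_eq_zero] at hu
      exact this.symm
  have hθrank : Module.finrank (ZMod 2) (LinearMap.ker φ) = Module.finrank (ZMod 2) W :=
    ((LinearEquiv.ofBijective θ hθbij).finrank_eq).symm
  -- range φ = ker δ'
  have hrangeφ : LinearMap.range φ = LinearMap.ker δ' := by
    ext q
    constructor
    · rintro ⟨⟨v, hvK⟩, rfl⟩
      rw [LinearMap.mem_ker, hφapp, Submodule.mkQ_apply, ← Submodule.mkQ_apply, hδ',
        Submodule.mkQ_apply, Submodule.Quotient.mk_eq_zero]
      refine (hS _).mpr ⟨ext (res v) - v, ?_, ?_⟩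
      · rw [hres_sub, hresext, sub_self]
      · rw [Matrix.mulVec_sub, hres_sub, (memK v).mp hvK]
        show res (δ.mulVec (ext (res v))) - res 0 = _
        rw [hresL, map_zero, sub_zero]
    · intro hq
      obtain ⟨x, rfl⟩ := S.mkQ_surjective q
      rw [LinearMap.mem_ker, hδ'] at hq
      have h1 : res (δ.mulVec (ext x)) ∈ S := by
        rw [Submodule.mkQ_apply, Submodule.Quotient.mk_eq_zero] at hq
        exact hq
      obtain ⟨w, hw1, hw2⟩ := (hS _).mp h1
      have hu2 : res (δ.mulVec (ext x - w)) = 0 := by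
        rw [Matrix.mulVec_sub, hres_sub, hw2, sub_self]
      have hu3 : δ.mulVec (ext x - w) = 0 := hgood' _ (hδδ _) hu2
      refine ⟨⟨ext x - w, (memK _).mpr hu3⟩, ?_⟩
      rw [hφapp]
      show S.mkQ (res (ext x - w)) = S.mkQ x
      rw [hres_sub, hresext, hw1, sub_zero]
  -- collect the dimension identities
  have e1 := Submodule.finrank_quotient_add_finrank S
  simp only [Module.finrank_pi, Fintype.card_fin] at e1
  have e2 := LinearMap.finrank_range_add_finrank_ker φ
  rw [hrangeφ, hθrank] at e2
  have e3 := LinearMap.finrank_range_add_finrank_ker δ'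
  refine ⟨?_, ?_, ?_, ?_⟩ <;> omega
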